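/- For all real numbers τ with 1 ≤ τ ≤ 2, ε with 0 < ε < 1, and ζ > 0, setting δ = (√(3−2ε)−1)/2, μ₁ = min{1,ζ}/4, μ₂ = min{δ,ζ}/4, R = (ε+√(3−2ε))/2 + ζ, the quantity (2R − δ − ε − 1 − τ·μ₁μ₂ − (1+2τ+R)μ₁)·(δ(1−μ₂) − 2μ₂) − (1−μ₂)(1−R) − μ₂τ is strictly positive. -/
import Mathlib

set_option maxHeartbeats 1000000 in
theorem stmt11 (τ ε ζ : ℝ) (hτ1 : 1 ≤ τ) (hτ2 : τ ≤ 2)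
    (hε0 : 0 < ε) (hε1 : ε < 1) (hζ : 0 < ζ) :
    let δ : ℝ := (Real.sqrt (3 - 2 * ε) - 1) / 2
    let μ₁ : ℝ := min 1 ζ / 4
    let μ₂ : ℝ := min δ ζ / 4
    let R : ℝ := (ε + Real.sqrt (3 - 2 * ε)) / 2 + ζ
    0 < (2 * R - δ - ε - 1 - τ * μ₁ * μ₂ - (1 + 2 * τ + R) * μ₁) *
          (δ * (1 - μ₂) - 2 * μ₂) - (1 - μ₂) * (1 - R) - μ₂ * τ := by
  have h3 : (0:ℝ) ≤ 3 - 2 * ε := by linarith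
  intro δ μ₁ μ₂ R
  set s := Real.sqrt (3 - 2 * ε) with hs
  have hs2 : s ^ 2 = 3 - 2 * ε := Real.sq_sqrt h3
  have hs0 : 0 ≤ s := Real.sqrt_nonneg _
  have hs1 : 1 < s := by nlinarith
  have hsu : s < 2 := by nlinarith
  have hδ : δ = (s - 1) / 2 := rfl
  have hR : R = (ε + s) / 2 + ζ := rfl
  have hδ0 : 0 < δ := by rw [hδ]; linarith
  have hδ1 : δ < 1 / 2 := by rw [hδ]; linarith
  -- key identity: ε = 3/2 - s^2/2, so (ε+s)/2 = 1 - δ^2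
  have hεs : ε = (3 - s ^ 2) / 2 := by linarith
  rcases le_total ζ δ with h1 | h1
  · have hμ1 : μ₁ = ζ / 4 := by
      have : min 1 ζ = ζ := min_eq_right (by linarith)
      simp only [μ₁, this]
    have hμ2 : μ₂ = ζ / 4 := by
      have : min δ ζ = ζ := min_eq_right h1
      simp only [μ₂, this]
    rw [hμ1, hμ2, hδ, hR, hεs]
    rw [hδ] at h1
    have hB : 0 < (s - 1) / 2 * (1 - ζ / 4) - 2 * (ζ / 4) := by nlinarith
    have hA : (s - 1) / 2 + ζ / 4 ≤
        2 * (((3 - s ^ 2) / 2 + s) / 2 + ζ) - (s - 1) / 2 - (3 - s ^ 2) / 2 - 1 -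
          τ * (ζ / 4) * (ζ / 4) - (1 + 2 * τ + (((3 - s ^ 2) / 2 + s) / 2 + ζ)) * (ζ / 4) := by
      nlinarith [mul_nonneg hζ.le (by linarith : (0:ℝ) ≤ 2 - τ),
        mul_pos hζ hζ, mul_nonneg (mul_nonneg hζ.le hζ.le) (by linarith : (0:ℝ) ≤ 2 - τ),
        mul_nonneg hζ.le (sub_nonneg.mpr h1)]
    have hprod := mul_le_mul_of_nonneg_right hA hB.le
    have hfin : 0 < ((s - 1) / 2 + ζ / 4) * ((s - 1) / 2 * (1 - ζ / 4) - 2 * (ζ / 4)) -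
        ((1 - ζ / 4) * (1 - (((3 - s ^ 2) / 2 + s) / 2 + ζ)) + ζ / 4 * τ) := by
      nlinarith [mul_nonneg hζ.le (by linarith : (0:ℝ) ≤ 2 - τ),
        mul_nonneg hζ.le (by linarith : (0:ℝ) ≤ 2 - s),
        mul_nonneg hζ.le (sub_nonneg.mpr h1),
        mul_nonneg (mul_nonneg hζ.le (by linarith : (0:ℝ) ≤ s - 1)) (by linarith : (0:ℝ) ≤ 2 - s)]
    linarith [hprod, hfin]
  · have hμ2 : μ₂ = δ / 4 := by
      have : min δ ζ = δ := min_eq_left h1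
      simp only [μ₂, this]
    rcases le_total ζ 1 with h2 | h2
    · have hμ1 : μ₁ = ζ / 4 := by
        have : min 1 ζ = ζ := min_eq_right h2
        simp only [μ₁, this]
      rw [hμ1, hμ2, hδ, hR, hεs]
      rw [hδ] at h1
      have hB : 0 < (s - 1) / 2 * (1 - (s - 1) / 2 / 4) - 2 * ((s - 1) / 2 / 4) := by
        nlinarith
      have hA : (s - 1) / 2 + ζ / 8 ≤
          2 * (((3 - s ^ 2) / 2 + s) / 2 + ζ) - (s - 1) / 2 - (3 - s ^ 2) / 2 - 1 -
            τ * (ζ / 4) * ((s - 1) / 2 / 4) -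
            (1 + 2 * τ + (((3 - s ^ 2) / 2 + s) / 2 + ζ)) * (ζ / 4) := by
        nlinarith [mul_nonneg hζ.le (by linarith : (0:ℝ) ≤ 2 - τ),
          mul_nonneg hζ.le (by linarith : (0:ℝ) ≤ 1 - ζ),
          mul_nonneg hζ.le (by linarith : (0:ℝ) ≤ 2 - s),
          mul_nonneg (mul_nonneg hζ.le (by linarith : (0:ℝ) ≤ 2 - τ)) (by linarith : (0:ℝ) ≤ s - 1),
          mul_nonneg (mul_nonneg hζ.le (by linarith : (0:ℝ) ≤ 2 - s)) (by linarith : (0:ℝ) ≤ s - 1)]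
      have hprod := mul_le_mul_of_nonneg_right hA hB.le
      have hfin : 0 < ((s - 1) / 2 + ζ / 8) *
            ((s - 1) / 2 * (1 - (s - 1) / 2 / 4) - 2 * ((s - 1) / 2 / 4)) -
          ((1 - (s - 1) / 2 / 4) * (1 - (((3 - s ^ 2) / 2 + s) / 2 + ζ)) + (s - 1) / 2 / 4 * τ) := by
        nlinarith [mul_nonneg (by linarith : (0:ℝ) ≤ ζ - (s - 1) / 2) (by linarith : (0:ℝ) ≤ s - 1),
          mul_nonneg (by linarith : (0:ℝ) ≤ s - 1) (by linarith : (0:ℝ) ≤ 2 - τ),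
          mul_nonneg (by linarith : (0:ℝ) ≤ s - 1) (by linarith : (0:ℝ) ≤ 2 - s),
          mul_nonneg (mul_nonneg (by linarith : (0:ℝ) ≤ s - 1) (by linarith : (0:ℝ) ≤ s - 1)) (by linarith : (0:ℝ) ≤ 2 - s),
          mul_nonneg hζ.le (by linarith : (0:ℝ) ≤ 2 - s),
          mul_nonneg (mul_nonneg hζ.le (by linarith : (0:ℝ) ≤ s - 1)) (by linarith : (0:ℝ) ≤ 2 - s)]
      linarith [hprod, hfin]
    · have hμ1 : μ₁ = 1 / 4 := by
        have : min 1 ζ = 1 := min_eq_left h2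
        simp only [μ₁, this]
      rw [hμ1, hμ2, hδ, hR, hεs]
      rw [hδ] at h1
      have hB : 0 < (s - 1) / 2 * (1 - (s - 1) / 2 / 4) - 2 * ((s - 1) / 2 / 4) := by
        nlinarith
      have hA : 0 < 2 * (((3 - s ^ 2) / 2 + s) / 2 + ζ) - (s - 1) / 2 - (3 - s ^ 2) / 2 - 1 -
            τ * (1 / 4) * ((s - 1) / 2 / 4) -
            (1 + 2 * τ + (((3 - s ^ 2) / 2 + s) / 2 + ζ)) * (1 / 4) := by
        nlinarith
      have hC : (1 - (s - 1) / 2 / 4) * (1 - (((3 - s ^ 2) / 2 + s) / 2 + ζ)) +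
          (s - 1) / 2 / 4 * τ < 0 := by
        nlinarith [mul_nonneg (by linarith : (0:ℝ) ≤ s - 1) (by linarith : (0:ℝ) ≤ ζ - 1)]
      nlinarith [mul_pos hA hB]
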